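/- Let n ≥ 2 be an integer and let 0 < b ≤ 1. If x > 0 satisfies x · ∫₀^b (cosh t + x · sinh t)^{n-1} dt = ∫₀^π (sin t)^{n-1} dt, then b · x ≥ ω_n / ((e + e⁻¹)/2 + 2·ω_n)^{n-1}, where ω_n := ∫₀^π (sin t)^{n-1} dt and e is Euler's number. -/

import Mathlib

/-- If `n ≥ 2`, `0 < b ≤ 1` and `x > 0` satisfies
`x * ∫_0^b (cosh t + x sinh t)^(n-1) dt = ω_n` where `ω_n = ∫_0^π (sin t)^(n-1) dt`,
then `b * x ≥ ω_n / ((e + e⁻¹)/2 + 2 ω_n)^(n-1)`. -/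
theorem mul_root_ge (n : ℕ) (hn : 2 ≤ n) (b : ℝ) (hb : 0 < b) (hb1 : b ≤ 1)
    (x : ℝ) (hx : 0 < x)
    (heq : x * (∫ t in (0:ℝ)..b, (Real.cosh t + x * Real.sinh t) ^ (n - 1)) =
      ∫ t in (0:ℝ)..Real.pi, Real.sin t ^ (n - 1)) :
    b * x ≥ (∫ t in (0:ℝ)..Real.pi, Real.sin t ^ (n - 1)) /
      ((Real.exp 1 + (Real.exp 1)⁻¹) / 2 +
        2 * ∫ t in (0:ℝ)..Real.pi, Real.sin t ^ (n - 1)) ^ (n - 1) := by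
  set ω : ℝ := ∫ t in (0:ℝ)..Real.pi, Real.sin t ^ (n - 1) with hωdef
  have hω : 0 < ω := integral_sin_pow_pos (n - 1)
  have hcont : Continuous fun t : ℝ => (Real.cosh t + x * Real.sinh t) ^ (n - 1) :=
    (Real.continuous_cosh.add (continuous_const.mul Real.continuous_sinh)).pow _
  have hint : IntervalIntegrable (fun t : ℝ => (Real.cosh t + x * Real.sinh t) ^ (n - 1))
      MeasureTheory.volume 0 b := hcont.intervalIntegrable 0 b
  have hn1 : n - 1 ≠ 0 := by omega
  -- bound x * sinh b ≤ ω
  have hlow : x * Real.sinh b ≤ ω := by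
    have h1 : ∫ t in (0:ℝ)..b, (Real.cosh t + x * Real.sinh t) ≤
        ∫ t in (0:ℝ)..b, (Real.cosh t + x * Real.sinh t) ^ (n - 1) := by
      apply intervalIntegral.integral_mono_on hb.le
      · exact ((Real.continuous_cosh.add
          (continuous_const.mul Real.continuous_sinh))).intervalIntegrable 0 b
      · exact hint
      · intro t ht
        have h1le : 1 ≤ Real.cosh t + x * Real.sinh t := by
          have := Real.one_le_cosh t
          have : 0 ≤ x * Real.sinh t :=
            mul_nonneg hx.le (by simpa using Real.sinh_nonneg_iff.mpr ht.1)
          nlinarith [Real.one_le_cosh t]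
        exact le_self_pow₀ h1le hn1
    have h2 : ∫ t in (0:ℝ)..b, (Real.cosh t + x * Real.sinh t) =
        Real.sinh b + x * (Real.cosh b - 1) := by
      rw [intervalIntegral.integral_add (g := fun t => x * Real.sinh t) (Real.continuous_cosh.intervalIntegrable 0 b)
        ((continuous_const.mul Real.continuous_sinh).intervalIntegrable 0 b),
        intervalIntegral.integral_const_mul,
        intervalIntegral.integral_eq_sub_of_hasDerivAt (f := Real.sinh)
          (fun t _ => Real.hasDerivAt_sinh t) (Real.continuous_cosh.intervalIntegrable 0 b),
        intervalIntegral.integral_eq_sub_of_hasDerivAt (f := Real.cosh)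
          (fun t _ => Real.hasDerivAt_cosh t) (Real.continuous_sinh.intervalIntegrable 0 b)]
      simp
    have h3 : x * (Real.sinh b + x * (Real.cosh b - 1)) ≤ ω := by
      rw [← heq]
      apply mul_le_mul_of_nonneg_left _ hx.le
      rw [← h2]; exact h1
    nlinarith [Real.one_le_cosh b, sq_nonneg x]
  -- upper bound on the integral
  set M : ℝ := Real.cosh b + x * Real.sinh b with hMdef
  have hMnonneg : 0 ≤ M := by
    have := Real.cosh_pos (x := b)
    have : 0 ≤ x * Real.sinh b := mul_nonneg hx.le (Real.sinh_nonneg_iff.mpr hb.le)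
    nlinarith [Real.cosh_pos (x := b)]
  have hup : ω ≤ x * (b * M ^ (n - 1)) := by
    have h1 : ∫ t in (0:ℝ)..b, (Real.cosh t + x * Real.sinh t) ^ (n - 1) ≤
        ∫ t in (0:ℝ)..b, M ^ (n - 1) := by
      apply intervalIntegral.integral_mono_on hb.le hint
        (intervalIntegrable_const)
      intro t ht
      apply pow_le_pow_left₀
      · have := Real.cosh_pos (x := t)
        have : 0 ≤ x * Real.sinh t := mul_nonneg hx.le (Real.sinh_nonneg_iff.mpr ht.1)
        nlinarith [Real.cosh_pos (x := t)]
      · have hc : Real.cosh t ≤ Real.cosh b := by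
          rw [Real.cosh_le_cosh]; rw [abs_of_nonneg ht.1, abs_of_nonneg hb.le]; exact ht.2
        have hs : Real.sinh t ≤ Real.sinh b := Real.sinh_le_sinh.mpr ht.2
        have := mul_le_mul_of_nonneg_left hs hx.le
        linarith
    rw [← heq]
    apply mul_le_mul_of_nonneg_left _ hx.le
    simpa using h1
  -- M ≤ cosh 1 + 2 ω
  have hM : M ≤ (Real.exp 1 + (Real.exp 1)⁻¹) / 2 + 2 * ω := by
    have hc1 : Real.cosh b ≤ Real.cosh 1 := by
      rw [Real.cosh_le_cosh, abs_of_nonneg hb.le, abs_one]; exact hb1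
    have : Real.cosh 1 = (Real.exp 1 + (Real.exp 1)⁻¹) / 2 := by
      rw [Real.cosh_eq, Real.exp_neg]
    linarith
  set D : ℝ := ((Real.exp 1 + (Real.exp 1)⁻¹) / 2 + 2 * ω) ^ (n - 1) with hDdef
  have hDpos : 0 < D := by
    apply pow_pos
    have : 0 < Real.cosh 1 := Real.cosh_pos 1
    rw [Real.cosh_eq, Real.exp_neg] at this
    linarith
  have hMD : M ^ (n - 1) ≤ D := pow_le_pow_left₀ hMnonneg hM _
  have hfinal : ω ≤ b * x * D := by
    calc ω ≤ x * (b * M ^ (n - 1)) := hup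
    _ ≤ x * (b * D) := by
        apply mul_le_mul_of_nonneg_left _ hx.le
        exact mul_le_mul_of_nonneg_left hMD hb.le
    _ = b * x * D := by ring
  rw [ge_iff_le, div_le_iff₀ hDpos]
  exact hfinal
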